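/- A phylogenetic tree on n taxa is determined up to label-preserving isomorphism by its set of induced splits: if two phylogenetic trees on {1,…,n} have the same split sets, they are isomorphic via an isomorphism fixing the leaf labels. -/

import Mathlib

open SimpleGraph


/-- A phylogenetic tree on `n` taxa: a finite tree whose degree-1 vertices (leaves)
are bijectively labelled by `Fin n`, and which has no vertices of degree 2. -/
structure PhyloTree (n : ℕ) where
  V : Type
  [fintypeV : Fintype V]
  [decEqV : DecidableEq V]
  G : SimpleGraph V
  [decAdj : DecidableRel G.Adj]
  isTree : G.IsTree
  leaf : Fin n → V
  leaf_inj : Function.Injective leaf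
  leaf_deg : ∀ i, G.degree (leaf i) = 1
  leaf_surj : ∀ v, G.degree v = 1 → ∃ i, leaf i = v
  no_deg2 : ∀ v, G.degree v ≠ 2

attribute [instance] PhyloTree.fintypeV PhyloTree.decEqV PhyloTree.decAdj

/-- The set of taxon labels lying on the `u`-side of the edge `{u, v}` after deleting it. -/
def PhyloTree.sideSet {n : ℕ} (T : PhyloTree n) (u v : T.V) : Set (Fin n) :=
  {i | (T.G.deleteEdges {s(u, v)}).Reachable u (T.leaf i)}

/-- An internal edge: an edge both of whose endpoints have degree at least 2. -/
def PhyloTree.IsInternalEdge {n : ℕ} (T : PhyloTree n) (u v : T.V) : Prop :=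
  T.G.Adj u v ∧ 2 ≤ T.G.degree u ∧ 2 ≤ T.G.degree v

/-- The set of splits induced by the internal edges of `T`. -/
def PhyloTree.splitSet {n : ℕ} (T : PhyloTree n) : Set (Set (Set (Fin n))) :=
  {P | ∃ u v, T.IsInternalEdge u v ∧ P = {T.sideSet u v, T.sideSet v u}}

/-- The set of internal edges of `T`. -/
def PhyloTree.internalEdgeSet {n : ℕ} (T : PhyloTree n) : Set (Sym2 T.V) :=
  {e | e ∈ T.G.edgeSet ∧ ∀ v ∈ e, 2 ≤ T.G.degree v}

namespace PhyloTree
variable {n : ℕ} (T : PhyloTree n)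

def vside (u w : T.V) : Set T.V := {x | (T.G.deleteEdges {s(u, w)}).Reachable u x}

variable {T}

lemma mem_sideSet_iff {u w : T.V} {i : Fin n} : i ∈ T.sideSet u w ↔ T.leaf i ∈ T.vside u w :=
  Iff.rfl

lemma self_mem_vside {u w : T.V} : u ∈ T.vside u w := SimpleGraph.Reachable.refl u

lemma not_mem_vside_of_adj {u w : T.V} (h : T.G.Adj u w) : w ∉ T.vside u w := by
  have hb := SimpleGraph.isAcyclic_iff_forall_adj_isBridge.mp T.isTree.IsAcyclic h
  rw [SimpleGraph.isBridge_iff] at hb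
  exact fun hr => hb hr

lemma vside_cover {u w : T.V} (h : T.G.Adj u w) (x : T.V) :
    x ∈ T.vside u w ∨ x ∈ T.vside w u := by
  suffices H : ∀ (a x : T.V), T.G.Walk a x → (a ∈ T.vside u w ∨ a ∈ T.vside w u) →
      (x ∈ T.vside u w ∨ x ∈ T.vside w u) by
    exact H u x (T.isTree.isConnected.preconnected u x).some (Or.inl self_mem_vside)
  intro a x p
  induction p with
  | nil => exact id
  | @cons a b x hadj q ih =>
    intro ha
    refine ih ?_
    by_cases he : s(a, b) = s(u, w)
    · rw [Sym2.eq_iff] at he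
      rcases he with ⟨rfl, rfl⟩ | ⟨rfl, rfl⟩
      · exact Or.inr self_mem_vside
      · exact Or.inl self_mem_vside
    · rcases ha with ha | ha
      · exact Or.inl (ha.trans (SimpleGraph.Adj.reachable (by
          rw [SimpleGraph.deleteEdges_adj]; exact ⟨hadj, by simpa using he⟩)))
      · refine Or.inr (ha.trans (SimpleGraph.Adj.reachable (by
          rw [SimpleGraph.deleteEdges_adj]
          refine ⟨hadj, ?_⟩
          simp only [Set.mem_singleton_iff]
          rw [Sym2.eq_swap] at he ⊢
          simpa [Sym2.eq_swap] using he)))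

lemma mem_vside_iff_not {u w : T.V} (h : T.G.Adj u w) {x : T.V} :
    x ∈ T.vside u w ↔ x ∉ T.vside w u := by
  constructor
  · intro hx hx'
    have hx'' : (T.G.deleteEdges {s(w, u)}).Reachable w x := hx'
    rw [show s(w, u) = s(u, w) from Sym2.eq_swap] at hx''
    exact not_mem_vside_of_adj h (hx.trans hx''.symm)
  · intro hx
    rcases vside_cover h x with h' | h'
    · exact h'
    · exact absurd h' hx

lemma reach_mono₂ {e f : Sym2 T.V} {a b : T.V} (h : (T.G.deleteEdges {e, f}).Reachable a b) :
    (T.G.deleteEdges {e}).Reachable a b :=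
  h.mono (T.G.deleteEdges_anti (by simp))

lemma crossing {u w a b : T.V} (hadj : T.G.Adj a b) (ha : a ∈ T.vside u w)
    (hb : b ∉ T.vside u w) : s(a, b) = s(u, w) := by
  by_contra he
  exact hb (ha.trans (SimpleGraph.Adj.reachable
    (by rw [SimpleGraph.deleteEdges_adj]; exact ⟨hadj, by simpa using he⟩)))

lemma reach_of_avoid {e f : Sym2 T.V} {a b v : T.V} (p : (T.G.deleteEdges {e}).Walk a b)
    (hv : v ∉ p.support) (hf : v ∈ f) : (T.G.deleteEdges {f}).Reachable a b := by
  refine ⟨p.transfer _ ?_⟩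
  intro ed hed
  have h1 : ed ∈ (T.G.deleteEdges {e}).edgeSet := p.edges_subset_edgeSet hed
  have h2 : ed ∈ T.G.edgeSet := SimpleGraph.edgeSet_subset_edgeSet.mpr (T.G.deleteEdges_le _) h1
  rw [SimpleGraph.edgeSet_deleteEdges]
  refine ⟨h2, ?_⟩
  simp only [Set.mem_singleton_iff]
  rintro rfl
  obtain ⟨c, rfl⟩ := Sym2.mem_iff_exists.mp hf
  exact hv (p.fst_mem_support_of_mem_edges hed)

lemma reach_of_not_mem_side {u w x v : T.V} (hx : x ∈ T.vside u w)
    (hv : v ∉ T.vside u w) {f : Sym2 T.V} (hf : v ∈ f) :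
    (T.G.deleteEdges {f}).Reachable u x := by
  obtain ⟨p⟩ := hx
  by_cases hvp : v ∈ p.support
  · exact absurd ⟨p.takeUntil v hvp⟩ hv
  · exact reach_of_avoid p hvp hf

lemma eq_of_reachable_isolated {V' : Type} {H : SimpleGraph V'} {a b : V'}
    (hiso : ∀ z, ¬ H.Adj a z) (h : H.Reachable a b) : a = b := by
  obtain ⟨p⟩ := h
  cases p with
  | nil => rfl
  | cons h q => exact absurd h (hiso _)

lemma adj_eq_of_degree_one {x y z : T.V} (hd : T.G.degree x = 1) (hy : T.G.Adj x y)
    (hz : T.G.Adj x z) : y = z := by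
  obtain ⟨a, ha⟩ := Finset.card_eq_one.mp hd
  have hy' : y ∈ T.G.neighborFinset x := (SimpleGraph.mem_neighborFinset _ _ _).mpr hy
  have hz' : z ∈ T.G.neighborFinset x := (SimpleGraph.mem_neighborFinset _ _ _).mpr hz
  rw [ha] at hy' hz'
  simp only [Finset.mem_singleton] at hy' hz'
  rw [hy', hz']

lemma leaf_isolated {i : Fin n} {w : T.V} (hadj : T.G.Adj (T.leaf i) w) (z : T.V) :
    ¬ (T.G.deleteEdges {s(T.leaf i, w)}).Adj (T.leaf i) z := by
  rw [SimpleGraph.deleteEdges_adj]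
  rintro ⟨hz, hne⟩
  apply hne
  rw [adj_eq_of_degree_one (T.leaf_deg i) hz hadj]
  exact Set.mem_singleton _

lemma pendant_side {i : Fin n} {w : T.V} (hadj : T.G.Adj (T.leaf i) w) :
    T.sideSet (T.leaf i) w = {i} := by
  ext j
  simp only [Set.mem_singleton_iff]
  constructor
  · intro hj
    exact T.leaf_inj (eq_of_reachable_isolated (leaf_isolated hadj) hj).symm
  · rintro rfl
    exact SimpleGraph.Reachable.refl _

lemma edge_of_length_one {V' : Type} {H : SimpleGraph V'} {z b : V'} (q : H.Walk z b)
    (hq : q.length = 1) : s(z, b) ∈ q.edges := by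
  cases q with
  | nil => simp at hq
  | cons hadj q2 =>
    cases q2 with
    | nil => simp
    | cons h2 q3 => simp [SimpleGraph.Walk.length_cons] at hq

lemma head_edge_eq {V' : Type} {H : SimpleGraph V'} {b a z₁ z₂ : V'} {r : H.Walk b a}
    (hr : r.IsPath) (h1 : s(z₁, b) ∈ r.edges) (h2 : s(z₂, b) ∈ r.edges)
    (hz₁ : z₁ ≠ b) (hz₂ : z₂ ≠ b) : z₁ = z₂ := by
  cases r with
  | nil => simp at h1
  | @cons _ c _ hadj q =>
    rw [SimpleGraph.Walk.edges_cons, List.mem_cons] at h1 h2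
    have hb : b ∉ q.support := ((SimpleGraph.Walk.cons_isPath_iff hadj q).mp hr).2
    have key : ∀ z, z ≠ b → (s(z, b) = s(b, c) ∨ s(z, b) ∈ q.edges) → z = c := by
      intro z hz hmem
      rcases hmem with he | he
      · rw [Sym2.eq_iff] at he
        rcases he with ⟨rfl, rfl⟩ | ⟨hzc, -⟩
        · exact absurd rfl hz
        · exact hzc
      · exact absurd (q.snd_mem_support_of_mem_edges he) hb
    exact (key z₁ hz₁ h1).trans (key z₂ hz₂ h2).symm

lemma nbr_unique {s : Set (Sym2 T.V)} {a b : T.V} {p : (T.G.deleteEdges s).Walk a b}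
    (hp : p.IsPath) (hcl : ∀ z, (T.G.deleteEdges s).Adj b z → z ∈ p.support)
    {z₁ z₂ : T.V} (hz1 : (T.G.deleteEdges s).Adj b z₁) (hz2 : (T.G.deleteEdges s).Adj b z₂) :
    z₁ = z₂ := by
  have hedge : ∀ z, (T.G.deleteEdges s).Adj b z → s(z, b) ∈ p.edges := by
    intro z hz
    have hs := hcl z hz
    have hGzb : T.G.Adj z b := (SimpleGraph.deleteEdges_adj.mp hz).1.symm
    set q := p.dropUntil z hs with hq
    have hqp : q.IsPath := hp.dropUntil hs
    have hq' : (q.mapLe (T.G.deleteEdges_le s)).IsPath :=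
      (SimpleGraph.Walk.mapLe_isPath _).mpr hqp
    have hsingle : (SimpleGraph.Walk.cons hGzb SimpleGraph.Walk.nil).IsPath := by
      simp [SimpleGraph.Walk.cons_isPath_iff, hGzb.ne]
    have huniq := (T.isTree.existsUnique_path z b).unique hq' hsingle
    have hlen : q.length = 1 := by
      have := congrArg SimpleGraph.Walk.length huniq
      simpa [SimpleGraph.Walk.length_map] using this
    exact (SimpleGraph.Walk.edges_dropUntil_subset p hs) (edge_of_length_one q hlen)
  have h1 := hedge z₁ hz1
  have h2 := hedge z₂ hz2
  have h1' : s(z₁, b) ∈ p.reverse.edges := by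
    rw [SimpleGraph.Walk.edges_reverse, List.mem_reverse]; exact h1
  have h2' : s(z₂, b) ∈ p.reverse.edges := by
    rw [SimpleGraph.Walk.edges_reverse, List.mem_reverse]; exact h2
  exact head_edge_eq hp.reverse h1' h2' hz1.ne' hz2.ne'

lemma deg_pos_of_edge {e : Sym2 T.V} (he : e ∈ T.G.edgeSet) (b : T.V) : 0 < T.G.degree b := by
  rw [SimpleGraph.degree_pos_iff_exists_adj]
  induction e using Sym2.ind with
  | _ x y =>
    rw [SimpleGraph.mem_edgeSet] at he
    by_cases hbx : b = x
    · exact ⟨y, hbx ▸ he⟩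
    · obtain ⟨p⟩ := T.isTree.isConnected.preconnected b x
      cases p with
      | nil => exact absurd rfl hbx
      | cons hadj q => exact ⟨_, hadj⟩

lemma deg_analysis {e₁ e₂ : Sym2 T.V} {b c : T.V}
    (hpos : 0 < T.G.degree b) (hnb : ∀ z, (T.G.deleteEdges {e₁, e₂}).Adj b z → z = c) :
    T.G.degree b = 1 ∨ (e₁ ≠ e₂ ∧ b ∈ e₁ ∧ b ∈ e₂) := by
  classical
  by_cases h1 : T.G.degree b = 1
  · exact Or.inl h1
  right
  have h3 : 3 ≤ T.G.degree b := by
    have := T.no_deg2 b; omega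
  set A := (T.G.neighborFinset b).filter (fun z => s(b, z) = e₁) with hA
  set B := (T.G.neighborFinset b).filter (fun z => s(b, z) = e₂) with hB
  have hAcard : A.card ≤ 1 := by
    rw [Finset.card_le_one]
    intro x hx y hy
    simp only [hA, Finset.mem_filter] at hx hy
    exact Sym2.congr_right.mp (hx.2.trans hy.2.symm)
  have hBcard : B.card ≤ 1 := by
    rw [Finset.card_le_one]
    intro x hx y hy
    simp only [hB, Finset.mem_filter] at hx hy
    exact Sym2.congr_right.mp (hx.2.trans hy.2.symm)
  have hsub : ∀ z ∈ T.G.neighborFinset b, z ∈ insert c (A ∪ B) := by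
    intro z hz
    have hadj : T.G.Adj b z := (SimpleGraph.mem_neighborFinset _ _ _).mp hz
    by_cases hz1 : s(b, z) = e₁
    · exact Finset.mem_insert_of_mem (Finset.mem_union_left _ (Finset.mem_filter.mpr ⟨hz, hz1⟩))
    by_cases hz2 : s(b, z) = e₂
    · exact Finset.mem_insert_of_mem (Finset.mem_union_right _ (Finset.mem_filter.mpr ⟨hz, hz2⟩))
    have : (T.G.deleteEdges {e₁, e₂}).Adj b z := by
      rw [SimpleGraph.deleteEdges_adj]
      exact ⟨hadj, by simp [hz1, hz2]⟩
    rw [hnb z this]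
    exact Finset.mem_insert_self c _
  have hcard : T.G.degree b ≤ 1 + (A.card + B.card) := by
    calc T.G.degree b = (T.G.neighborFinset b).card := rfl
    _ ≤ (insert c (A ∪ B)).card := Finset.card_le_card (fun z hz => hsub z hz)
    _ ≤ (A ∪ B).card + 1 := Finset.card_insert_le _ _
    _ ≤ (A.card + B.card) + 1 := by
        have := Finset.card_union_le A B; omega
    _ = 1 + (A.card + B.card) := by omega
  have hbe₁ : b ∈ e₁ := by
    by_contra hbe
    have : A = ∅ := by
      rw [Finset.eq_empty_iff_forall_notMem]
      intro z hz
      simp only [hA, Finset.mem_filter] at hz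
      exact hbe (hz.2 ▸ Sym2.mem_mk_left b z)
    rw [this] at hcard
    simp at hcard
    omega
  have hbe₂ : b ∈ e₂ := by
    by_contra hbe
    have : B = ∅ := by
      rw [Finset.eq_empty_iff_forall_notMem]
      intro z hz
      simp only [hB, Finset.mem_filter] at hz
      exact hbe (hz.2 ▸ Sym2.mem_mk_left b z)
    rw [this] at hcard
    simp at hcard
    omega
  refine ⟨?_, hbe₁, hbe₂⟩
  rintro rfl
  have hAB : A ∪ B = A := by rw [hA, hB, Finset.union_self]
  have hcard2 : T.G.degree b ≤ A.card + 1 := by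
    calc T.G.degree b = (T.G.neighborFinset b).card := rfl
    _ ≤ (insert c (A ∪ B)).card := Finset.card_le_card (fun z hz => hsub z hz)
    _ ≤ (A ∪ B).card + 1 := Finset.card_insert_le _ _
    _ = A.card + 1 := by rw [hAB]
  omega

lemma deg_le_two_of_isolated {e₁ e₂ : Sym2 T.V} {b : T.V}
    (hnb : ∀ z, ¬ (T.G.deleteEdges {e₁, e₂}).Adj b z) : T.G.degree b ≤ 2 := by
  classical
  set A := (T.G.neighborFinset b).filter (fun z => s(b, z) = e₁) with hA
  set B := (T.G.neighborFinset b).filter (fun z => s(b, z) = e₂) with hB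
  have hAcard : A.card ≤ 1 := by
    rw [Finset.card_le_one]
    intro x hx y hy
    simp only [hA, Finset.mem_filter] at hx hy
    exact Sym2.congr_right.mp (hx.2.trans hy.2.symm)
  have hBcard : B.card ≤ 1 := by
    rw [Finset.card_le_one]
    intro x hx y hy
    simp only [hB, Finset.mem_filter] at hx hy
    exact Sym2.congr_right.mp (hx.2.trans hy.2.symm)
  have hsub : ∀ z ∈ T.G.neighborFinset b, z ∈ A ∪ B := by
    intro z hz
    have hadj : T.G.Adj b z := (SimpleGraph.mem_neighborFinset _ _ _).mp hz
    by_cases hz1 : s(b, z) = e₁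
    · exact Finset.mem_union_left _ (Finset.mem_filter.mpr ⟨hz, hz1⟩)
    by_cases hz2 : s(b, z) = e₂
    · exact Finset.mem_union_right _ (Finset.mem_filter.mpr ⟨hz, hz2⟩)
    exact absurd (SimpleGraph.deleteEdges_adj.mpr ⟨hadj, by simp [hz1, hz2]⟩) (hnb z)
  calc T.G.degree b = (T.G.neighborFinset b).card := rfl
  _ ≤ (A ∪ B).card := Finset.card_le_card (fun z hz => hsub z hz)
  _ ≤ A.card + B.card := Finset.card_union_le _ _
  _ ≤ 2 := by omega

lemma exists_leaf_reach {e₁ e₂ : Sym2 T.V} (he₁ : e₁ ∈ T.G.edgeSet) (he₂ : e₂ ∈ T.G.edgeSet)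
    (v : T.V) : ∃ i, (T.G.deleteEdges {e₁, e₂}).Reachable v (T.leaf i) := by
  classical
  by_contra hno
  push_neg at hno
  set H := T.G.deleteEdges {e₁, e₂} with hH
  have hleaf : ∀ b : T.V, H.Reachable v b → T.G.degree b ≠ 1 := by
    intro b hr hdeg
    obtain ⟨i, rfl⟩ := T.leaf_surj b hdeg
    exact hno i hr
  have grow : ∀ k : ℕ, ∃ (a b : T.V) (p : H.Walk a b), p.IsPath ∧ H.Reachable v a ∧ k ≤ p.length := by
    intro k
    induction k with
    | zero => exact ⟨v, v, SimpleGraph.Walk.nil, by simp, SimpleGraph.Reachable.refl v, by simp⟩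
    | succ k ih =>
      obtain ⟨a, b, p, hp, hra, hl⟩ := ih
      by_cases hextb : ∃ z, H.Adj b z ∧ z ∉ p.support
      · obtain ⟨z, hz, hzs⟩ := hextb
        have hzs' : z ∉ p.reverse.support := by
          rwa [SimpleGraph.Walk.support_reverse, List.mem_reverse]
        refine ⟨a, z, (SimpleGraph.Walk.cons hz.symm p.reverse).reverse, ?_, hra, ?_⟩
        · exact ((SimpleGraph.Walk.cons_isPath_iff _ _).mpr ⟨hp.reverse, hzs'⟩).reverse
        · rw [SimpleGraph.Walk.length_reverse, SimpleGraph.Walk.length_cons,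
            SimpleGraph.Walk.length_reverse]
          omega
      by_cases hexta : ∃ z, H.Adj a z ∧ z ∉ p.support
      · obtain ⟨z, hz, hzs⟩ := hexta
        refine ⟨z, b, SimpleGraph.Walk.cons hz.symm p, ?_, hra.trans hz.reachable, ?_⟩
        · exact (SimpleGraph.Walk.cons_isPath_iff _ _).mpr ⟨hp, hzs⟩
        · rw [SimpleGraph.Walk.length_cons]; omega
      -- both ends closed
      exfalso
      push_neg at hextb hexta
      -- unique-neighbour data
      have hclb : ∀ z, H.Adj b z → z ∈ p.support := fun z hz => hextb z hz
      have hcla : ∀ z, H.Adj a z → z ∈ p.reverse.support := by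
        intro z hz
        rw [SimpleGraph.Walk.support_reverse, List.mem_reverse]
        exact hexta z hz
      have hrb : H.Reachable v b := hra.trans ⟨p⟩
      -- case : trivial path
      rcases Nat.eq_zero_or_pos p.length with hlen0 | hlenpos
      · have hab : a = b := SimpleGraph.Walk.eq_of_length_eq_zero hlen0
        subst hab
        -- a has no H-neighbours
        have hiso : ∀ z, ¬ H.Adj a z := by
          intro z hz
          have hzs := hclb z hz
          have : p = SimpleGraph.Walk.nil := by
            cases p with
            | nil => rfl
            | cons h q => simp [SimpleGraph.Walk.length_cons] at hlen0
          rw [this] at hzs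
          simp at hzs
          exact hz.ne hzs.symm
        have hd2 := deg_le_two_of_isolated hiso
        have hdpos := deg_pos_of_edge he₁ a
        have := T.no_deg2 a
        exact hleaf a hra (by omega)
      -- nontrivial path : a ≠ b
      have hab : a ≠ b := by
        rintro rfl
        have hnil : p = SimpleGraph.Walk.nil := SimpleGraph.Walk.isPath_iff_eq_nil.mp hp
        rw [hnil] at hlenpos
        simp at hlenpos
      -- analysis at b
      have hb_disj : T.G.degree b = 1 ∨ (e₁ ≠ e₂ ∧ b ∈ e₁ ∧ b ∈ e₂) := by
        by_cases hez : ∃ z, H.Adj b z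
        · obtain ⟨z₀, hz₀⟩ := hez
          exact deg_analysis (deg_pos_of_edge he₁ b)
            (fun z hz => nbr_unique hp hclb hz hz₀)
        · push_neg at hez
          have := deg_le_two_of_isolated hez
          have := T.no_deg2 b
          have := deg_pos_of_edge he₁ b
          exact Or.inl (by omega)
      have ha_disj : T.G.degree a = 1 ∨ (e₁ ≠ e₂ ∧ a ∈ e₁ ∧ a ∈ e₂) := by
        by_cases hez : ∃ z, H.Adj a z
        · obtain ⟨z₀, hz₀⟩ := hez
          exact deg_analysis (deg_pos_of_edge he₁ a)
            (fun z hz => nbr_unique hp.reverse hcla hz hz₀)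
        · push_neg at hez
          have := deg_le_two_of_isolated hez
          have := T.no_deg2 a
          have := deg_pos_of_edge he₁ a
          exact Or.inl (by omega)
      rcases hb_disj with hdb | ⟨hne, hbe₁, hbe₂⟩
      · exact hleaf b hrb hdb
      rcases ha_disj with hda | ⟨-, hae₁, hae₂⟩
      · exact hleaf a hra hda
      have h1 : e₁ = s(a, b) := (Sym2.mem_and_mem_iff hab).mp ⟨hae₁, hbe₁⟩
      have h2 : e₂ = s(a, b) := (Sym2.mem_and_mem_iff hab).mp ⟨hae₂, hbe₂⟩
      exact hne (h1.trans h2.symm)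
  obtain ⟨a, b, p, hp, hra, hl⟩ := grow (Fintype.card T.V)
  have := hp.length_lt
  omega

lemma transfer_avoid {a b v : T.V} (p : T.G.Walk a b) (hv : v ∉ p.support)
    {f : Sym2 T.V} (hf : v ∈ f) : (T.G.deleteEdges {f}).Reachable a b := by
  refine ⟨p.transfer _ ?_⟩
  intro ed hed
  have h2 : ed ∈ T.G.edgeSet := p.edges_subset_edgeSet hed
  rw [SimpleGraph.edgeSet_deleteEdges]
  refine ⟨h2, ?_⟩
  simp only [Set.mem_singleton_iff]
  rintro rfl
  obtain ⟨c, rfl⟩ := Sym2.mem_iff_exists.mp hf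
  exact hv (p.fst_mem_support_of_mem_edges hed)

lemma sideSet_compl {u w : T.V} (h : T.G.Adj u w) : T.sideSet w u = (T.sideSet u w)ᶜ := by
  ext i
  simp only [Set.mem_compl_iff]
  rw [mem_sideSet_iff, mem_sideSet_iff]
  exact mem_vside_iff_not h.symm

lemma pendant_coside {j : Fin n} {u : T.V} (hadj : T.G.Adj u (T.leaf j)) :
    T.sideSet u (T.leaf j) = {j}ᶜ := by
  rw [show ({j}ᶜ : Set (Fin n)) = ({j} : Set (Fin n))ᶜ from rfl, ← pendant_side hadj.symm,
    sideSet_compl hadj.symm]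

lemma exists_first_edge {u v : T.V} (hne : u ≠ v) : ∃ m, T.G.Adj u m ∧ v ∈ T.vside m u := by
  obtain ⟨p0⟩ := T.isTree.isConnected.preconnected u v
  obtain ⟨p, hp⟩ : ∃ p : T.G.Walk u v, p.IsPath := ⟨p0.toPath.val, p0.toPath.property⟩
  cases p with
  | nil => exact absurd rfl hne
  | @cons _ m _ hadj r =>
    refine ⟨m, hadj, ?_⟩
    have hu : u ∉ r.support := ((SimpleGraph.Walk.cons_isPath_iff _ _).mp hp).2
    exact transfer_avoid r hu (Sym2.mem_mk_right m u)

lemma sideSet_diff_aux {u w u' w' x : T.V} (hu : T.G.Adj u w) (hu' : T.G.Adj u' w')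
    (hx : x ∈ T.vside u w) (hx' : x ∉ T.vside u' w') :
    ∃ i, i ∈ T.sideSet u w ∧ i ∉ T.sideSet u' w' := by
  obtain ⟨i, hi⟩ := exists_leaf_reach (T.G.mem_edgeSet.mpr hu) (T.G.mem_edgeSet.mpr hu') x
  refine ⟨i, ?_, ?_⟩
  · exact hx.trans (hi.mono (T.G.deleteEdges_anti (by simp)))
  · have hx2 : x ∈ T.vside w' u' := (vside_cover hu' x).resolve_left hx'
    have hlf : T.leaf i ∈ T.vside w' u' := by
      refine hx2.trans ?_
      have h2 : (T.G.deleteEdges {s(u', w')}).Reachable x (T.leaf i) :=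
        hi.mono (T.G.deleteEdges_anti (by simp))
      show (T.G.deleteEdges {s(w', u')}).Reachable x (T.leaf i)
      rwa [show s(w', u') = s(u', w') from Sym2.eq_swap]
    exact fun hmem => (mem_vside_iff_not hu').mp hmem hlf

lemma vside_eq_of_sideSet_eq {u w u' w' : T.V} (hu : T.G.Adj u w) (hu' : T.G.Adj u' w')
    (hss : T.sideSet u w = T.sideSet u' w') : T.vside u w = T.vside u' w' := by
  by_contra hne
  rw [Set.ext_iff] at hne
  push_neg at hne
  obtain ⟨x, hx⟩ := hne
  rcases hx with ⟨hx1, hx2⟩ | ⟨hx1, hx2⟩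
  · obtain ⟨i, hi1, hi2⟩ := sideSet_diff_aux hu hu' hx1 hx2
    rw [hss] at hi1
    exact hi2 hi1
  · obtain ⟨i, hi1, hi2⟩ := sideSet_diff_aux hu' hu hx2 hx1
    rw [← hss] at hi1
    exact hi2 hi1

lemma dir_eq_of_sideSet_eq {u w u' w' : T.V} (hu : T.G.Adj u w) (hu' : T.G.Adj u' w')
    (hss : T.sideSet u w = T.sideSet u' w') : u = u' ∧ w = w' := by
  have hv := vside_eq_of_sideSet_eq hu hu' hss
  have humem : u ∈ T.vside u' w' := hv ▸ self_mem_vside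
  have hwmem : w ∉ T.vside u' w' := by
    rw [← hv]
    exact fun hmem => (mem_vside_iff_not hu).mp hmem self_mem_vside
  have hcr := crossing hu humem hwmem
  rw [Sym2.eq_iff] at hcr
  rcases hcr with ⟨rfl, rfl⟩ | ⟨rfl, rfl⟩
  · exact ⟨rfl, rfl⟩
  · exact absurd humem ((mem_vside_iff_not hu).mp self_mem_vside)

variable (T) in
def Lset (v : T.V) : Set (Set (Fin n)) :=
  {A | ∃ u w, T.G.Adj u w ∧ v ∈ T.vside u w ∧ A = T.sideSet u w}

variable (T) in
def SigmaSet : Set (Set (Fin n)) := {A | ∃ u w, T.G.Adj u w ∧ A = T.sideSet u w}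

lemma Lset_subset_Sigma (v : T.V) : Lset T v ⊆ SigmaSet T := by
  rintro A ⟨u, w, huw, _, rfl⟩
  exact ⟨u, w, huw, rfl⟩

lemma mem_Lset_iff {v u w : T.V} (huw : T.G.Adj u w) :
    T.sideSet u w ∈ Lset T v ↔ v ∈ T.vside u w := by
  constructor
  · rintro ⟨u', w', h', hv', hA⟩
    obtain ⟨rfl, rfl⟩ := dir_eq_of_sideSet_eq h' huw hA.symm
    exact hv'
  · intro hv
    exact ⟨u, w, huw, hv, rfl⟩

lemma Lset_inj {u v : T.V} (h : Lset T u = Lset T v) : u = v := by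
  by_contra hne
  obtain ⟨m, hm, hv⟩ := exists_first_edge hne
  have h1 : T.sideSet u m ∈ Lset T u := ⟨u, m, hm, self_mem_vside, rfl⟩
  rw [h, mem_Lset_iff hm] at h1
  exact (mem_vside_iff_not hm).mp h1 hv

lemma Lset_leaf (i : Fin n) : Lset T (T.leaf i) = {A | A ∈ SigmaSet T ∧ i ∈ A} := by
  ext A
  constructor
  · rintro ⟨u, w, huw, hv, rfl⟩
    exact ⟨⟨u, w, huw, rfl⟩, hv⟩
  · rintro ⟨⟨u, w, huw, rfl⟩, hi⟩
    exact ⟨u, w, huw, hi, rfl⟩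

lemma adj_iff_Lset {u v : T.V} : T.G.Adj u v ↔ ∃ A, Lset T u \ Lset T v = {A} := by
  constructor
  · intro h
    refine ⟨T.sideSet u v, ?_⟩
    ext B
    simp only [Set.mem_diff, Set.mem_singleton_iff]
    constructor
    · rintro ⟨⟨x, y, hxy, hux, rfl⟩, hB⟩
      have hvx : v ∉ T.vside x y := fun hv => hB ⟨x, y, hxy, hv, rfl⟩
      have hcr := crossing h hux hvx
      rw [Sym2.eq_iff] at hcr
      rcases hcr with ⟨rfl, rfl⟩ | ⟨rfl, rfl⟩
      · rfl
      · exact absurd hux ((mem_vside_iff_not h).mp self_mem_vside)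
    · rintro rfl
      refine ⟨⟨u, v, h, self_mem_vside, rfl⟩, fun hmem => ?_⟩
      rw [mem_Lset_iff h] at hmem
      exact (mem_vside_iff_not h).mp hmem self_mem_vside
  · rintro ⟨A, hA⟩
    have hAmem : A ∈ Lset T u \ Lset T v := by rw [hA]; rfl
    obtain ⟨⟨x, y, hxy, hux, rfl⟩, hAv⟩ := hAmem
    have hne : u ≠ v := by
      rintro rfl
      exact hAv ⟨x, y, hxy, hux, rfl⟩
    obtain ⟨p0⟩ := T.isTree.isConnected.preconnected u v
    obtain ⟨p, hp⟩ : ∃ p : T.G.Walk u v, p.IsPath := ⟨p0.toPath.val, p0.toPath.property⟩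
    clear hux hAv hxy
    cases p with
    | nil => exact absurd rfl hne
    | @cons _ m _ hadj r =>
      have hu : u ∉ r.support := ((SimpleGraph.Walk.cons_isPath_iff _ _).mp hp).2
      have hr : r.IsPath := ((SimpleGraph.Walk.cons_isPath_iff _ _).mp hp).1
      have hclaim1 : T.sideSet u m ∈ Lset T u \ Lset T v := by
        refine ⟨⟨u, m, hadj, self_mem_vside, rfl⟩, fun hmem => ?_⟩
        rw [mem_Lset_iff hadj] at hmem
        have hvm : v ∈ T.vside m u := transfer_avoid r hu (Sym2.mem_mk_right m u)
        exact (mem_vside_iff_not hadj).mp hmem hvm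
      cases r with
      | nil => exact hadj
      | @cons _ m2 _ hadj2 r2 =>
        exfalso
        -- second edge also in the difference
        have hm : m ∉ r2.support := ((SimpleGraph.Walk.cons_isPath_iff _ _).mp hr).2
        have hum2 : u ≠ m2 := by
          intro hEq
          apply hu
          rw [hEq, SimpleGraph.Walk.support_cons]
          exact List.mem_cons_of_mem _ r2.start_mem_support
        have hclaim2 : T.sideSet m m2 ∈ Lset T u \ Lset T v := by
          refine ⟨⟨m, m2, hadj2, ?_, rfl⟩, fun hmem => ?_⟩
          · -- u ∈ vside m m2 : single edge m ~ u avoiding s(m,m2)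
            refine SimpleGraph.Adj.reachable ?_
            rw [SimpleGraph.deleteEdges_adj]
            refine ⟨hadj.symm, ?_⟩
            intro heq
            rw [Set.mem_singleton_iff, Sym2.eq_iff] at heq
            rcases heq with ⟨h1, h2⟩ | ⟨h1, h2⟩
            · exact hum2 h2
            · exact hadj2.ne h1
          · rw [mem_Lset_iff hadj2] at hmem
            have hvm : v ∈ T.vside m2 m := transfer_avoid r2 hm (Sym2.mem_mk_right m2 m)
            exact (mem_vside_iff_not hadj2).mp hmem hvm
        rw [hA, Set.mem_singleton_iff] at hclaim1 hclaim2
        have := dir_eq_of_sideSet_eq hadj hadj2 (hclaim1.trans hclaim2.symm)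
        exact hadj.ne this.1

lemma branch_disjoint {v c c' x : T.V} (hc : T.G.Adj v c) (hc' : T.G.Adj v c') (hne : c ≠ c')
    (h1 : x ∈ T.vside c v) (h2 : x ∈ T.vside c' v) : False := by
  have hvn : v ∉ T.vside c v := fun hm => (mem_vside_iff_not hc.symm).mp hm self_mem_vside
  have hr1 : (T.G.deleteEdges {s(c', v)}).Reachable c x :=
    reach_of_not_mem_side h1 hvn (Sym2.mem_mk_right c' v)
  have hr2 : (T.G.deleteEdges {s(c', v)}).Reachable c' x := h2
  have hadjstep : (T.G.deleteEdges {s(c', v)}).Adj c v := by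
    rw [SimpleGraph.deleteEdges_adj]
    refine ⟨hc.symm, ?_⟩
    simp only [Set.mem_singleton_iff, Sym2.eq_iff]
    rintro (⟨h3, h4⟩ | ⟨h3, h4⟩)
    · exact hne h3
    · exact hc.ne' h3
  have : v ∈ T.vside c' v := hr2.trans (hr1.symm.trans hadjstep.reachable)
  exact (mem_vside_iff_not hc').mp self_mem_vside this

lemma gate_exists {v u w : T.V} (huw : T.G.Adj u w) (hv : v ∉ T.vside u w) :
    ∃ c, T.G.Adj v c ∧ T.vside u w ⊆ T.vside c v := by
  have hne : v ≠ u := fun hEq => hv (hEq ▸ self_mem_vside)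
  obtain ⟨c, hc, hu⟩ := exists_first_edge hne
  refine ⟨c, hc, fun x hx => ?_⟩
  exact hu.trans (reach_of_not_mem_side hx hv (Sym2.mem_mk_right c v))

lemma gate_full (K : Set (Set (Fin n)))
    (hK2 : ∀ A ∈ K, ∀ B ∈ K, (A ∩ B).Nonempty)
    {v u w : T.V} (huw : T.G.Adj u w) (hK : T.sideSet u w ∈ K) (hv : v ∉ T.vside u w) :
    ∃ c, T.G.Adj v c ∧ ∀ u2 w2, T.G.Adj u2 w2 → T.sideSet u2 w2 ∈ K → v ∉ T.vside u2 w2 →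
      T.vside u2 w2 ⊆ T.vside c v := by
  obtain ⟨c, hc, hsub⟩ := gate_exists huw hv
  refine ⟨c, hc, fun u2 w2 h2 hK2' hv2 => ?_⟩
  obtain ⟨c2, hc2, hsub2⟩ := gate_exists h2 hv2
  obtain ⟨i, hi1, hi2⟩ := hK2 _ hK2' _ hK
  by_cases hcc : c2 = c
  · exact hcc ▸ hsub2
  · exact absurd (hsub2 (mem_sideSet_iff.mp hi1)) (fun hmem =>
      branch_disjoint hc2 hc hcc hmem (hsub (mem_sideSet_iff.mp hi2)))

lemma realize (K : Set (Set (Fin n)))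
    (hK1 : ∀ u w, T.G.Adj u w → (T.sideSet u w ∈ K ↔ T.sideSet w u ∉ K))
    (hK2 : ∀ A ∈ K, ∀ B ∈ K, (A ∩ B).Nonempty) :
    ∃ x : T.V, ∀ u w, T.G.Adj u w → T.sideSet u w ∈ K → x ∈ T.vside u w := by
  classical
  have main : ∀ (k : ℕ) (v c : T.V), T.G.Adj v c →
      (∀ u w, T.G.Adj u w → T.sideSet u w ∈ K → v ∉ T.vside u w → T.vside u w ⊆ T.vside c v) →
      (T.vside c v).ncard ≤ k →
      ∃ x : T.V, ∀ u w, T.G.Adj u w → T.sideSet u w ∈ K → x ∈ T.vside u w := by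
    intro k
    induction k using Nat.strong_induction_on with
    | _ k ih =>
      intro v c hvc hgate hcard
      by_cases hGv : ∀ u w, T.G.Adj u w → T.sideSet u w ∈ K → v ∈ T.vside u w
      · exact ⟨v, hGv⟩
      push_neg at hGv
      obtain ⟨u, w, huw, hKuw, hvuw⟩ := hGv
      -- the edge (v,c) is oriented towards c
      have hKcv : T.sideSet c v ∈ K := by
        rw [hK1 c v hvc.symm]
        intro hKvc
        obtain ⟨i, hi1, hi2⟩ := hK2 _ hKvc _ hKuw
        have h1 : T.leaf i ∈ T.vside v c := mem_sideSet_iff.mp hi1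
        have h2 : T.leaf i ∈ T.vside c v := hgate u w huw hKuw hvuw (mem_sideSet_iff.mp hi2)
        exact (mem_vside_iff_not hvc).mp h1 h2
      by_cases hGc : ∀ u2 w2, T.G.Adj u2 w2 → T.sideSet u2 w2 ∈ K → c ∈ T.vside u2 w2
      · exact ⟨c, hGc⟩
      push_neg at hGc
      obtain ⟨u', w', hu'w', hK', hcu'⟩ := hGc
      obtain ⟨c', hcc', hgate'⟩ := gate_full K hK2 hu'w' hK' hcu'
      -- c' ≠ v
      have hvnot : v ∉ T.vside u' w' := by
        intro hvmem
        have hcr := crossing hvc hvmem hcu'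
        rw [Sym2.eq_iff] at hcr
        rcases hcr with ⟨h1, h2⟩ | ⟨h1, h2⟩
        · subst h1; subst h2
          rw [hK1 v c hvc] at hK'
          exact hK' hKcv
        · subst h1; subst h2
          exact hcu' self_mem_vside
      have hsubv : T.vside u' w' ⊆ T.vside c v := hgate u' w' hu'w' hK' hvnot
      have hc'v : c' ≠ v := by
        rintro rfl
        have h1 : u' ∈ T.vside c' c := hgate' u' w' hu'w' hK' hcu' self_mem_vside
        have h2 : u' ∈ T.vside c c' := hsubv self_mem_vside
        exact (mem_vside_iff_not hcc') |>.mp h2 h1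
      -- strict decrease
      have hsubset : T.vside c' c ⊆ T.vside c v := by
        intro x hx
        have hcn : c ∉ T.vside c' c := fun hm =>
          (mem_vside_iff_not hcc'.symm).mp hm self_mem_vside
        have hr : (T.G.deleteEdges {s(c, v)}).Reachable c' x :=
          reach_of_not_mem_side hx hcn (Sym2.mem_mk_left c v)
        have hstep : (T.G.deleteEdges {s(c, v)}).Adj c c' := by
          rw [SimpleGraph.deleteEdges_adj]
          refine ⟨hcc', ?_⟩
          simp only [Set.mem_singleton_iff, Sym2.eq_iff]
          rintro (⟨h1, h2⟩ | ⟨h1, h2⟩)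
          · exact hc'v h2
          · exact hvc.ne h1.symm
        exact hstep.reachable.trans hr
      have hcnotin : c ∉ T.vside c' c := fun hm =>
        (mem_vside_iff_not hcc'.symm).mp hm self_mem_vside
      have hclt : (T.vside c' c).ncard < (T.vside c v).ncard := by
        refine Set.ncard_lt_ncard ?_ (Set.toFinite _)
        rw [Set.ssubset_iff_subset_ne]
        refine ⟨hsubset, fun hEq => ?_⟩
        exact hcnotin (hEq ▸ self_mem_vside)
      exact ih (T.vside c' c).ncard (by omega) c c' hcc' hgate' le_rfl
  -- initialise
  obtain ⟨v0⟩ := T.isTree.isConnected.nonempty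
  by_cases hGv : ∀ u w, T.G.Adj u w → T.sideSet u w ∈ K → v0 ∈ T.vside u w
  · exact ⟨v0, hGv⟩
  push_neg at hGv
  obtain ⟨u, w, huw, hKuw, hvuw⟩ := hGv
  obtain ⟨c, hc, hgate⟩ := gate_full K hK2 huw hKuw hvuw
  exact main (T.vside c v0).ncard v0 c hc hgate le_rfl

lemma sigma_sub {T₁ T₂ : PhyloTree n} (h : T₁.splitSet ⊆ T₂.splitSet) :
    SigmaSet T₁ ⊆ SigmaSet T₂ := by
  rintro A ⟨u, w, huw, rfl⟩
  by_cases hdu : 2 ≤ T₁.G.degree u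
  · by_cases hdw : 2 ≤ T₁.G.degree w
    · have hmem : {T₁.sideSet u w, T₁.sideSet w u} ∈ T₁.splitSet :=
        ⟨u, w, ⟨huw, hdu, hdw⟩, rfl⟩
      obtain ⟨u', w', hint, hpair⟩ := h hmem
      have hin : T₁.sideSet u w ∈ ({T₂.sideSet u' w', T₂.sideSet w' u'} : Set (Set (Fin n))) := by
        rw [← hpair]
        exact Set.mem_insert _ _
      rw [Set.mem_insert_iff, Set.mem_singleton_iff] at hin
      rcases hin with hEq | hEq
      · exact ⟨u', w', hint.1, hEq⟩
      · exact ⟨w', u', hint.1.symm, hEq⟩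
    · have hdw1 : T₁.G.degree w = 1 := by
        have : 0 < T₁.G.degree w := (SimpleGraph.degree_pos_iff_exists_adj _ _).mpr ⟨u, huw.symm⟩
        omega
      obtain ⟨j, rfl⟩ := T₁.leaf_surj w hdw1
      rw [pendant_coside huw]
      have hd2 : 0 < T₂.G.degree (T₂.leaf j) := by rw [T₂.leaf_deg j]; omega
      obtain ⟨x, hx⟩ := (SimpleGraph.degree_pos_iff_exists_adj _ _).mp hd2
      exact ⟨x, T₂.leaf j, hx.symm, (pendant_coside hx.symm).symm⟩
  · have hdu1 : T₁.G.degree u = 1 := by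
      have : 0 < T₁.G.degree u := (SimpleGraph.degree_pos_iff_exists_adj _ _).mpr ⟨w, huw⟩
      omega
    obtain ⟨i, rfl⟩ := T₁.leaf_surj u hdu1
    rw [pendant_side huw]
    have hd2 : 0 < T₂.G.degree (T₂.leaf i) := by rw [T₂.leaf_deg i]; omega
    obtain ⟨x, hx⟩ := (SimpleGraph.degree_pos_iff_exists_adj _ _).mp hd2
    exact ⟨T₂.leaf i, x, hx, (pendant_side hx).symm⟩

lemma cross_main {T₁ T₂ : PhyloTree n} (hs : SigmaSet T₁ = SigmaSet T₂) (v : T₁.V) :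
    ∃ x : T₂.V, Lset T₂ x = Lset T₁ v := by
  have hK1 : ∀ u w, T₂.G.Adj u w →
      (T₂.sideSet u w ∈ Lset T₁ v ↔ T₂.sideSet w u ∉ Lset T₁ v) := by
    intro u w huw
    have hA : T₂.sideSet u w ∈ SigmaSet T₁ := by rw [hs]; exact ⟨u, w, huw, rfl⟩
    obtain ⟨x, y, hxy, hAxy⟩ := hA
    have hB : T₂.sideSet w u = T₁.sideSet y x := by
      rw [sideSet_compl huw, sideSet_compl hxy, hAxy]
    rw [hAxy, hB, mem_Lset_iff hxy, mem_Lset_iff hxy.symm]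
    exact mem_vside_iff_not hxy
  have hK2 : ∀ A ∈ Lset T₁ v, ∀ B ∈ Lset T₁ v, (A ∩ B).Nonempty := by
    rintro A ⟨x, y, hxy, hvx, rfl⟩ B ⟨x', y', hx'y', hvx', rfl⟩
    obtain ⟨i, hi⟩ := exists_leaf_reach (T₁.G.mem_edgeSet.mpr hxy) (T₁.G.mem_edgeSet.mpr hx'y') v
    refine ⟨i, ?_, ?_⟩
    · exact hvx.trans (hi.mono (T₁.G.deleteEdges_anti (by simp)))
    · exact hvx'.trans (hi.mono (T₁.G.deleteEdges_anti (by simp)))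
  obtain ⟨x, hx⟩ := realize (Lset T₁ v) hK1 hK2
  refine ⟨x, Set.eq_of_subset_of_subset ?_ ?_⟩
  · rintro A ⟨u, w, huw, hmem, rfl⟩
    by_cases hKA : T₂.sideSet u w ∈ Lset T₁ v
    · exact hKA
    · have hwu : T₂.sideSet w u ∈ Lset T₁ v := by
        by_contra hKB
        exact hKA ((hK1 u w huw).mpr hKB)
      have hmem2 := hx w u huw.symm hwu
      exact absurd hmem2 ((mem_vside_iff_not huw).mp hmem)
  · intro A hA
    have hA2 : A ∈ SigmaSet T₂ := by rw [← hs]; exact Lset_subset_Sigma v hA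
    obtain ⟨u, w, huw, rfl⟩ := hA2
    exact ⟨u, w, huw, hx u w huw hA, rfl⟩

end PhyloTree

open PhyloTree in
theorem phyloTree_determined_by_splits {n : ℕ} (T₁ T₂ : PhyloTree n)
    (h : T₁.splitSet = T₂.splitSet) :
    ∃ φ : T₁.G ≃g T₂.G, ∀ i, φ (T₁.leaf i) = T₂.leaf i := by
  classical
  have hs : SigmaSet T₁ = SigmaSet T₂ :=
    Set.eq_of_subset_of_subset (sigma_sub h.subset) (sigma_sub h.symm.subset)
  have hf : ∀ v : T₁.V, ∃ x : T₂.V, Lset T₂ x = Lset T₁ v := cross_main hs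
  have hg : ∀ v : T₂.V, ∃ x : T₁.V, Lset T₁ x = Lset T₂ v := cross_main hs.symm
  choose f hfL using hf
  choose g hgL using hg
  have hgf : ∀ v, g (f v) = v := fun v => Lset_inj (by rw [hgL, hfL])
  have hfg : ∀ v, f (g v) = v := fun v => Lset_inj (by rw [hfL, hgL])
  refine ⟨⟨⟨f, g, hgf, hfg⟩, ?_⟩, ?_⟩
  · intro a b
    show T₂.G.Adj (f a) (f b) ↔ T₁.G.Adj a b
    rw [adj_iff_Lset, adj_iff_Lset, hfL, hfL]
  · intro i
    show f (T₁.leaf i) = T₂.leaf i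
    apply Lset_inj (T := T₂)
    rw [hfL, Lset_leaf, Lset_leaf, hs]
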